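/- Let b : ℝ → ℝ be Lipschitz continuous with Lipschitz constant C > 0, and for ε > 0 let b_ε(x) = ∫_ℝ b(x⁰) ψ_ε(x⁰ − x) dx⁰ be its Gaussian mollification. Then b_ε is twice differentiable and its second derivative satisfies the uniform bound |b_ε''(x)| ≤ C √(2/π) / ε for all x ∈ ℝ; together with |b_ε'(x)| ≤ C, the mollification b_ε has bounded derivatives of order one and two for each fixed ε > 0. -/

import Mathlib

open MeasureTheory Real

/-- The Gaussian kernel with variance `ε²`. -/
noncomputable def gaussKernel (ε y : ℝ) : ℝ :=
  (1 / Real.sqrt (2 * Real.pi * ε ^ 2)) * Real.exp (-(y ^ 2) / (2 * ε ^ 2))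

/-- The Gaussian mollification `b_ε` of `b`. -/
noncomputable def gaussMollify (ε : ℝ) (b : ℝ → ℝ) (x : ℝ) : ℝ :=
  ∫ x0 : ℝ, b x0 * gaussKernel ε (x0 - x)

namespace GM
variable {ε : ℝ}

lemma gc_pos (hε : 0 < ε) : 0 < 1 / Real.sqrt (2 * Real.pi * ε ^ 2) := by
  have : 0 < 2 * Real.pi * ε ^ 2 := by positivity
  positivity

lemma gK_nonneg (hε : 0 < ε) (y : ℝ) : 0 ≤ gaussKernel ε y := by
  unfold gaussKernel; positivity

lemma gK_rw (y : ℝ) : gaussKernel ε y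
    = (1 / Real.sqrt (2 * Real.pi * ε ^ 2)) * Real.exp (-(1/(2*ε^2)) * y ^ 2) := by
  unfold gaussKernel; ring_nf

lemma gK_cont : Continuous (gaussKernel ε) := by
  unfold gaussKernel
  exact continuous_const.mul ((continuous_pow 2).neg.div_const _).rexp

lemma hasDerivAt_gK (hε : 0 < ε) (y : ℝ) :
    HasDerivAt (gaussKernel ε) (-(y/ε^2) * gaussKernel ε y) y := by
  have h1 : HasDerivAt (fun y : ℝ => -(y ^ 2) / (2 * ε ^ 2)) (-(2*y) / (2*ε^2)) y := by
    simpa [neg_div] using ((hasDerivAt_pow 2 y).neg.div_const (2 * ε ^ 2))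
  have := (h1.exp.const_mul (1 / Real.sqrt (2 * Real.pi * ε ^ 2)))
  refine this.congr_deriv ?_
  unfold gaussKernel
  field_simp

lemma integral_gK (hε : 0 < ε) : ∫ y : ℝ, gaussKernel ε y = 1 := by
  have h2 : (0:ℝ) < 2 * Real.pi * ε ^ 2 := by positivity
  have hb : (0:ℝ) < 1/(2*ε^2) := by positivity
  simp_rw [gK_rw]
  rw [integral_const_mul, integral_gaussian]
  have e : Real.pi / (1/(2*ε^2)) = 2 * Real.pi * ε ^ 2 := by
    field_simp
  rw [e, one_div, inv_mul_cancel₀ (Real.sqrt_ne_zero'.2 h2)]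

lemma integrable_gK (hε : 0 < ε) : Integrable (gaussKernel ε) := by
  have hb : (0:ℝ) < 1/(2*ε^2) := by positivity
  have := (integrable_exp_neg_mul_sq hb).const_mul (1 / Real.sqrt (2 * Real.pi * ε ^ 2))
  exact this.congr (Filter.Eventually.of_forall fun y => (gK_rw y).symm)

lemma integrable_abs_gK (hε : 0 < ε) : Integrable (fun y : ℝ => |y| * gaussKernel ε y) := by
  have hb : (0:ℝ) < 1/(2*ε^2) := by positivity
  have h1 : Integrable (fun y : ℝ => |y| * Real.exp (-(1/(2*ε^2)) * y^2)) := by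
    have := (integrable_mul_exp_neg_mul_sq hb).abs
    refine this.congr (Filter.Eventually.of_forall fun y => ?_)
    simp only [abs_mul, abs_of_pos (Real.exp_pos _)]
  have := h1.const_mul (1 / Real.sqrt (2 * Real.pi * ε ^ 2))
  refine this.congr (Filter.Eventually.of_forall fun y => ?_)
  simp only [gK_rw]; ring

lemma integral_Ioi_mul_exp {k : ℝ} (hk : 0 < k) :
    ∫ t in Set.Ioi (0:ℝ), t * Real.exp (-k * t^2) = (2*k)⁻¹ := by
  have A : ∀ t : ℝ, HasDerivAt (fun t : ℝ => -(2*k)⁻¹ * Real.exp (-k * t^2))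
      (t * Real.exp (-k * t^2)) t := by
    intro t
    have h1 : HasDerivAt (fun t : ℝ => -k * t^2) (-k * (2*t)) t := by
      simpa using ((hasDerivAt_pow 2 t).const_mul (-k))
    refine (h1.exp.const_mul (-(2*k)⁻¹)).congr_deriv ?_
    field_simp
  have B : Filter.Tendsto (fun t : ℝ => -(2*k)⁻¹ * Real.exp (-k * t^2))
      Filter.atTop (nhds (-(2*k)⁻¹ * 0)) := by
    refine Filter.Tendsto.const_mul _ ?_
    apply Real.tendsto_exp_atBot.comp
    exact (Filter.tendsto_pow_atTop (two_ne_zero)).const_mul_atTop_of_neg (by linarith : -k < 0)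
  have := integral_Ioi_of_hasDerivAt_of_tendsto' (a := (0:ℝ))
    (f := fun t : ℝ => -(2*k)⁻¹ * Real.exp (-k * t^2))
    (fun t _ => A t) ((integrable_mul_exp_neg_mul_sq hk).integrableOn (s := Set.Ioi (0:ℝ))) B
  rw [this]
  simp

lemma integral_abs_gK (hε : 0 < ε) :
    ∫ y : ℝ, |y| * gaussKernel ε y = Real.sqrt (2/Real.pi) * ε := by
  have h2 : (0:ℝ) < 2 * Real.pi * ε ^ 2 := by positivity
  have hk : (0:ℝ) < 1/(2*ε^2) := by positivity
  set c := 1 / Real.sqrt (2 * Real.pi * ε ^ 2) with hc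
  have h1 : ∀ y : ℝ, |y| * gaussKernel ε y
      = (fun t : ℝ => t * (c * Real.exp (-(1/(2*ε^2)) * t^2))) |y| := by
    intro y
    show |y| * gaussKernel ε y = |y| * (c * Real.exp (-(1/(2*ε^2)) * |y|^2))
    simp only [gaussKernel, sq_abs, hc]
    ring_nf
  have key := integral_comp_abs (f := fun t : ℝ => t * (c * Real.exp (-(1/(2*ε^2)) * t^2)))
  calc ∫ y : ℝ, |y| * gaussKernel ε y
      = ∫ y : ℝ, (fun t : ℝ => t * (c * Real.exp (-(1/(2*ε^2)) * t^2))) |y| :=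
        congrArg _ (funext h1)
    _ = 2 * ∫ t in Set.Ioi (0:ℝ), t * (c * Real.exp (-(1/(2*ε^2)) * t^2)) := key
    _ = 2 * ∫ t in Set.Ioi (0:ℝ), c * (t * Real.exp (-(1/(2*ε^2)) * t^2)) := by
        congr 1
        exact setIntegral_congr_fun measurableSet_Ioi (fun t _ => by ring)
    _ = 2 * (c * ∫ t in Set.Ioi (0:ℝ), t * Real.exp (-(1/(2*ε^2)) * t^2)) := by
        rw [integral_const_mul]
    _ = Real.sqrt (2/Real.pi) * ε := by
        rw [integral_Ioi_mul_exp hk]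
        have h3 : (2 * (1/(2*ε^2)))⁻¹ = ε^2 := by field_simp
        rw [h3, hc]
        have key2 : Real.sqrt (2/Real.pi) * Real.sqrt (2 * Real.pi * ε ^ 2) = 2*ε := by
          rw [← Real.sqrt_mul (by positivity : (0:ℝ) ≤ 2/Real.pi)]
          rw [show 2 / Real.pi * (2 * Real.pi * ε ^ 2) = (2*ε)^2 by field_simp]
          exact Real.sqrt_sq (by positivity)
        rw [div_mul_eq_mul_div, one_mul, mul_div_assoc']
        rw [div_eq_iff (Real.sqrt_ne_zero'.2 h2), mul_right_comm, key2]
        ring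

lemma keyA (hε : 0 < ε) (t : ℝ) : |t| * Real.exp (-(t^2)/(4*ε^2)) ≤ ε := by
  have hq : (0:ℝ) < 4*ε^2 := by positivity
  have he : 1 + t^2/(4*ε^2) ≤ Real.exp (t^2/(4*ε^2)) := by
    have := Real.add_one_le_exp (t^2/(4*ε^2)); linarith
  have hpos : (0:ℝ) < 1 + t^2/(4*ε^2) := by positivity
  have h1 : Real.exp (-(t^2)/(4*ε^2)) = (Real.exp (t^2/(4*ε^2)))⁻¹ := by
    rw [← Real.exp_neg]; ring_nf
  rw [h1]
  have h2 : (Real.exp (t^2/(4*ε^2)))⁻¹ ≤ (1 + t^2/(4*ε^2))⁻¹ :=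
    inv_anti₀ hpos he
  calc |t| * (Real.exp (t^2/(4*ε^2)))⁻¹ ≤ |t| * (1 + t^2/(4*ε^2))⁻¹ :=
        mul_le_mul_of_nonneg_left h2 (abs_nonneg t)
    _ ≤ ε := by
        rw [← div_eq_mul_inv, div_le_iff₀ hpos]
        have hs : t^2/(4*ε^2) * (4*ε^2) = t^2 := div_mul_cancel₀ _ (by positivity)
        nlinarith [sq_nonneg (|t| - 2*ε), sq_abs t, hε]

lemma keyB (hε : 0 < ε) (t : ℝ) : t^2 * Real.exp (-(t^2)/(4*ε^2)) ≤ 4*ε^2 := by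
  have hq : (0:ℝ) < 4*ε^2 := by positivity
  have he : 1 + t^2/(4*ε^2) ≤ Real.exp (t^2/(4*ε^2)) := by
    have := Real.add_one_le_exp (t^2/(4*ε^2)); linarith
  have hpos : (0:ℝ) < 1 + t^2/(4*ε^2) := by positivity
  have h1 : Real.exp (-(t^2)/(4*ε^2)) = (Real.exp (t^2/(4*ε^2)))⁻¹ := by
    rw [← Real.exp_neg]; ring_nf
  rw [h1]
  have h2 : (Real.exp (t^2/(4*ε^2)))⁻¹ ≤ (1 + t^2/(4*ε^2))⁻¹ :=
    inv_anti₀ hpos he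
  calc t^2 * (Real.exp (t^2/(4*ε^2)))⁻¹ ≤ t^2 * (1 + t^2/(4*ε^2))⁻¹ :=
        mul_le_mul_of_nonneg_left h2 (sq_nonneg t)
    _ ≤ 4*ε^2 := by
        rw [← div_eq_mul_inv, div_le_iff₀ hpos]
        have hs : t^2/(4*ε^2) * (4*ε^2) = t^2 := div_mul_cancel₀ _ (by positivity)
        nlinarith

lemma ballExp (hε : 0 < ε) {x₀ x a : ℝ} (hx : |x - x₀| < 1) :
    Real.exp (-((a-x)^2)/(4*ε^2)) ≤ Real.exp (1/(4*ε^2)) * Real.exp (-(1/(8*ε^2)) * (a-x₀)^2) := by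
  rw [← Real.exp_add]
  apply Real.exp_le_exp.2
  have hx2 : (x - x₀)^2 < 1 := by
    have := abs_lt.1 hx
    nlinarith
  have hq : (a - x₀)^2 ≤ 2*(a-x)^2 + 2 := by nlinarith [sq_nonneg ((a-x) - (x-x₀)), hx2]
  have hr : (0:ℝ) < (ε^2)⁻¹ := by positivity
  have e1 : -((a-x)^2)/(4*ε^2) = -((a-x)^2) * (ε^2)⁻¹ / 4 := by
    rw [mul_comm (4:ℝ) (ε^2), ← div_div, div_eq_mul_inv]
    ring
  have e2 : 1/(4*ε^2) = (ε^2)⁻¹/4 := by rw [mul_comm (4:ℝ) (ε^2), ← div_div, one_div]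
  have e3 : -(1/(8*ε^2)) * (a-x₀)^2 = -((a-x₀)^2) * (ε^2)⁻¹/8 := by
    rw [mul_comm (8:ℝ) (ε^2), ← div_div, div_eq_mul_inv]
    ring
  rw [e1, e2, e3]
  nlinarith [mul_le_mul_of_nonneg_right hq hr.le]

/-- Splitting the Gaussian kernel into two half-variance exponentials. -/
lemma gK_split (hε : 0 < ε) (t : ℝ) : gaussKernel ε t
    = (1 / Real.sqrt (2 * Real.pi * ε ^ 2)) *
      (Real.exp (-(t^2)/(4*ε^2)) * Real.exp (-(t^2)/(4*ε^2))) := by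
  rw [← Real.exp_add, gaussKernel]
  congr 1
  field_simp
  ring

lemma bound1 (hε : 0 < ε) (t : ℝ) :
    |t| * gaussKernel ε t
      ≤ (1 / Real.sqrt (2 * Real.pi * ε ^ 2)) * ε * Real.exp (-(t^2)/(4*ε^2)) := by
  rw [gK_split hε]
  have hc : (0:ℝ) ≤ 1 / Real.sqrt (2 * Real.pi * ε ^ 2) := (gc_pos hε).le
  have hE : (0:ℝ) ≤ Real.exp (-(t^2)/(4*ε^2)) := (Real.exp_pos _).le
  nlinarith [keyA hε t, mul_nonneg hc hE]

lemma bound2 (hε : 0 < ε) (t : ℝ) :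
    t^2 * gaussKernel ε t
      ≤ (1 / Real.sqrt (2 * Real.pi * ε ^ 2)) * (4*ε^2) * Real.exp (-(t^2)/(4*ε^2)) := by
  rw [gK_split hε]
  have hc : (0:ℝ) ≤ 1 / Real.sqrt (2 * Real.pi * ε ^ 2) := (gc_pos hε).le
  have hE : (0:ℝ) ≤ Real.exp (-(t^2)/(4*ε^2)) := (Real.exp_pos _).le
  nlinarith [keyB hε t, mul_nonneg hc hE]

lemma bound0 (hε : 0 < ε) (t : ℝ) :
    gaussKernel ε t
      ≤ (1 / Real.sqrt (2 * Real.pi * ε ^ 2)) * Real.exp (-(t^2)/(4*ε^2)) := by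
  rw [gK_split hε]
  have hc : (0:ℝ) ≤ 1 / Real.sqrt (2 * Real.pi * ε ^ 2) := (gc_pos hε).le
  have hE : (0:ℝ) ≤ Real.exp (-(t^2)/(4*ε^2)) := (Real.exp_pos _).le
  have hE1 : Real.exp (-(t^2)/(4*ε^2)) ≤ 1 := by
    rw [show (1:ℝ) = Real.exp 0 by simp]
    apply Real.exp_le_exp.2
    have : (0:ℝ) ≤ t^2/(4*ε^2) := by positivity
    rw [neg_div]
    linarith
  nlinarith [mul_le_mul_of_nonneg_left hE1 (mul_nonneg hc hE)]

lemma int_master {k : ℝ} (hk : 0 < k) (A B x₀ : ℝ) :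
    Integrable (fun a : ℝ => (A + B * |a - x₀|) * Real.exp (-k * (a - x₀)^2)) := by
  have h1 : Integrable (fun u : ℝ => (A + B * |u|) * Real.exp (-k * u^2)) := by
    have hA := (integrable_exp_neg_mul_sq hk).const_mul A
    have hB : Integrable (fun u : ℝ => |u| * Real.exp (-k * u^2)) := by
      have := (integrable_mul_exp_neg_mul_sq hk).abs
      refine this.congr (Filter.Eventually.of_forall fun u => ?_)
      simp only [abs_mul, abs_of_pos (Real.exp_pos _)]
    have := hA.add (hB.const_mul B)
    refine this.congr (Filter.Eventually.of_forall fun u => ?_)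
    simp only [Pi.add_apply]
    ring
  exact h1.comp_sub_right x₀

/-- The slope argument: a global Lipschitz estimate bounds the derivative. -/
lemma abs_le_of_slope {f : ℝ → ℝ} {f' K : ℝ} {x : ℝ} (hd : HasDerivAt f f' x)
    (hlip : ∀ y, |f y - f x| ≤ K * |y - x|) : |f'| ≤ K := by
  have h := hasDerivAt_iff_tendsto_slope.1 hd
  refine le_of_tendsto h.abs ?_
  filter_upwards [self_mem_nhdsWithin] with y hy
  have hyx : (y:ℝ) ≠ x := hy
  have hpos : 0 < |y - x| := abs_pos.2 (sub_ne_zero.2 hyx)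
  have e : slope f x y = (f y - f x) / (y - x) := slope_def_field f x y
  rw [e, abs_div, div_le_iff₀ hpos]
  exact hlip y

end GM

open GM Metric in
/-- the Gaussian mollification of a `C`-Lipschitz function is twice
differentiable, its first derivative is bounded by `C`, and its second derivative is
bounded by `C √(2/π) / ε`. -/
theorem gaussMollify_second_deriv_bound (b : ℝ → ℝ) (C : ℝ) (hC : 0 < C)
    (hLip : ∀ x y : ℝ, |b x - b y| ≤ C * |x - y|) (ε : ℝ) (hε : 0 < ε) :
    (∀ x : ℝ, DifferentiableAt ℝ (gaussMollify ε b) x) ∧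
      (∀ x : ℝ, DifferentiableAt ℝ (deriv (gaussMollify ε b)) x) ∧
      (∀ x : ℝ, |deriv (gaussMollify ε b) x| ≤ C) ∧
      (∀ x : ℝ, |deriv (deriv (gaussMollify ε b)) x| ≤ C * Real.sqrt (2 / Real.pi) / ε) := by
  -- notation
  set c : ℝ := 1 / Real.sqrt (2 * Real.pi * ε ^ 2) with hc
  have hcpos : 0 < c := gc_pos hε
  have hbc : Continuous b := by
    have : LipschitzWith (Real.toNNReal C) b := by
      apply LipschitzWith.of_dist_le_mul
      intro x y
      rw [Real.dist_eq, Real.dist_eq, Real.coe_toNNReal _ hC.le]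
      exact hLip x y
    exact this.continuous
  have hbb : ∀ a x₀ : ℝ, |b a| ≤ (|b 0| + C * |x₀|) + C * |a - x₀| := by
    intro a x₀
    have h1 : |b a - b 0| ≤ C * |a| := by simpa using hLip a 0
    have h2 : |a| ≤ |x₀| + |a - x₀| := by
      have := abs_add_le x₀ (a - x₀)
      simpa using this
    have h3 : |b a| ≤ |b 0| + |b a - b 0| := by
      have := abs_add_le (b 0) (b a - b 0)
      simpa using this
    nlinarith [abs_nonneg a, abs_nonneg (a - x₀)]
  -- the three integrands
  set F0 : ℝ → ℝ → ℝ := fun x a => b a * gaussKernel ε (a - x) with hF0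
  set F1 : ℝ → ℝ → ℝ := fun x a => b a * ((a - x)/ε^2 * gaussKernel ε (a - x)) with hF1
  set F2 : ℝ → ℝ → ℝ := fun x a =>
    b a * (((a - x)^2/ε^4 - 1/ε^2) * gaussKernel ε (a - x)) with hF2
  -- continuity in `a`
  have contsub : ∀ x : ℝ, Continuous (fun a : ℝ => a - x) :=
    fun x => continuous_id.sub continuous_const
  have cont0 : ∀ x : ℝ, Continuous (F0 x) := fun x =>
    hbc.mul (gK_cont.comp (contsub x))
  have cont1 : ∀ x : ℝ, Continuous (F1 x) := fun x =>
    hbc.mul ((((contsub x).div_const _)).mul (gK_cont.comp (contsub x)))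
  have cont2 : ∀ x : ℝ, Continuous (F2 x) := fun x =>
    hbc.mul (((((contsub x).pow 2).div_const _).sub continuous_const).mul
      (gK_cont.comp (contsub x)))
  -- pointwise derivatives in x
  have hd0 : ∀ x a : ℝ, HasDerivAt (fun x => F0 x a) (F1 x a) x := by
    intro x a
    have h1 : HasDerivAt (fun x : ℝ => a - x) (-1) x := (hasDerivAt_id x).const_sub a
    have h2 := ((hasDerivAt_gK hε (a - x)).comp x h1).const_mul (b a)
    refine h2.congr_deriv ?_
    simp only [hF1]
    ring
  have hd1 : ∀ x a : ℝ, HasDerivAt (fun x => F1 x a) (F2 x a) x := by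
    intro x a
    have h1 : HasDerivAt (fun x : ℝ => (a - x)/ε^2) (-1/ε^2) x :=
      ((hasDerivAt_id x).const_sub a).div_const _
    have h2 : HasDerivAt (fun x : ℝ => gaussKernel ε (a - x))
        (-((a-x)/ε^2) * gaussKernel ε (a-x) * (-1)) x :=
      (hasDerivAt_gK hε (a - x)).comp x ((hasDerivAt_id x).const_sub a)
    have h3 := (h1.mul h2).const_mul (b a)
    refine h3.congr_deriv ?_
    simp only [hF2]
    ring
  -- abs values
  have habs1 : ∀ x a : ℝ, |F1 x a| = |b a| * ((ε^2)⁻¹ * (|a - x| * gaussKernel ε (a - x))) := by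
    intro x a
    simp only [hF1]
    rw [abs_mul, abs_mul, abs_div, abs_of_nonneg (gK_nonneg hε _),
      abs_of_pos (by positivity : (0:ℝ) < ε^2)]
    ring
  have habs2 : ∀ x a : ℝ, |F2 x a|
      ≤ |b a| * (((a-x)^2/ε^4 + 1/ε^2) * gaussKernel ε (a - x)) := by
    intro x a
    simp only [hF2]
    rw [abs_mul, abs_mul, abs_of_nonneg (gK_nonneg hε _)]
    have h1 : |(a - x)^2/ε^4 - 1/ε^2| ≤ (a-x)^2/ε^4 + 1/ε^2 := by
      have := abs_sub ((a - x)^2/ε^4) (1/ε^2)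
      calc |(a - x)^2/ε^4 - 1/ε^2| ≤ |(a - x)^2/ε^4| + |1/ε^2| := abs_sub _ _
        _ = (a-x)^2/ε^4 + 1/ε^2 := by
            rw [abs_of_nonneg (by positivity), abs_of_nonneg (by positivity)]
    exact mul_le_mul_of_nonneg_left
      (mul_le_mul_of_nonneg_right h1 (gK_nonneg hε _)) (abs_nonneg _)
  -- integrability of F0, F1, F2 at any point (via explicit gaussian domination)
  have hk2 : (0:ℝ) < 1/(2*ε^2) := by positivity
  have hk8 : (0:ℝ) < 1/(8*ε^2) := by positivity
  have int0 : ∀ x : ℝ, Integrable (F0 x) := by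
    intro x
    have hbd := (int_master hk2 (|b 0| + C * |x|) C x).const_mul c
    refine Integrable.mono' hbd (cont0 x).aestronglyMeasurable
      (Filter.Eventually.of_forall fun a => ?_)
    have e : gaussKernel ε (a - x) = c * Real.exp (-(1/(2*ε^2)) * (a-x)^2) := gK_rw _
    rw [Real.norm_eq_abs]
    simp only [hF0]
    rw [abs_mul, abs_of_nonneg (gK_nonneg hε _), e]
    have := mul_le_mul_of_nonneg_right (hbb a x)
      (by positivity : (0:ℝ) ≤ c * Real.exp (-(1/(2*ε^2)) * (a-x)^2))
    calc |b a| * (c * Real.exp (-(1/(2*ε^2)) * (a-x)^2))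
        ≤ ((|b 0| + C * |x|) + C * |a - x|) * (c * Real.exp (-(1/(2*ε^2)) * (a-x)^2)) := this
      _ = c * (((|b 0| + C * |x|) + C * |a - x|) * Real.exp (-(1/(2*ε^2)) * (a-x)^2)) := by ring
  -- the dominated-derivative step, twice
  have step1 : ∀ x₀ : ℝ, Integrable (F1 x₀) ∧
      HasDerivAt (fun x => ∫ a, F0 x a) (∫ a, F1 x₀ a) x₀ := by
    intro x₀
    set A := |b 0| + C * |x₀| with hA
    set M := (ε^2)⁻¹ * (c * ε * Real.exp (1/(4*ε^2))) with hM
    have hMpos : 0 < M := by positivity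
    refine hasDerivAt_integral_of_dominated_loc_of_deriv_le (Metric.ball_mem_nhds x₀ one_pos)
      (Filter.Eventually.of_forall fun x => (cont0 x).aestronglyMeasurable)
      (int0 x₀) (cont1 x₀).aestronglyMeasurable
      (bound := fun a => M * ((A + C * |a - x₀|) * Real.exp (-(1/(8*ε^2)) * (a - x₀)^2)))
      (Filter.Eventually.of_forall fun a x hx => ?_)
      ((int_master hk8 A C x₀).const_mul M)
      (Filter.Eventually.of_forall fun a x _ => hd0 x a)
    -- the bound
    have hx1 : |x - x₀| < 1 := by
      rw [← Real.dist_eq]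
      exact mem_ball.1 hx
    rw [Real.norm_eq_abs, habs1]
    have h1 : |a - x| * gaussKernel ε (a - x) ≤ c * ε * Real.exp (-((a-x)^2)/(4*ε^2)) :=
      bound1 hε _
    have h2 : Real.exp (-((a-x)^2)/(4*ε^2))
        ≤ Real.exp (1/(4*ε^2)) * Real.exp (-(1/(8*ε^2)) * (a-x₀)^2) := ballExp hε hx1
    calc |b a| * ((ε^2)⁻¹ * (|a - x| * gaussKernel ε (a - x)))
        ≤ |b a| * ((ε^2)⁻¹ * (c * ε * Real.exp (-((a-x)^2)/(4*ε^2)))) := by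
          apply mul_le_mul_of_nonneg_left _ (abs_nonneg _)
          exact mul_le_mul_of_nonneg_left h1 (by positivity)
      _ ≤ |b a| * ((ε^2)⁻¹ * (c * ε * (Real.exp (1/(4*ε^2)) * Real.exp (-(1/(8*ε^2)) * (a-x₀)^2)))) := by
          apply mul_le_mul_of_nonneg_left _ (abs_nonneg _)
          apply mul_le_mul_of_nonneg_left _ (by positivity)
          exact mul_le_mul_of_nonneg_left h2 (by positivity)
      _ ≤ (A + C * |a - x₀|) * ((ε^2)⁻¹ * (c * ε * (Real.exp (1/(4*ε^2)) * Real.exp (-(1/(8*ε^2)) * (a-x₀)^2)))) := by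
          apply mul_le_mul_of_nonneg_right (hbb a x₀)
          positivity
      _ = M * ((A + C * |a - x₀|) * Real.exp (-(1/(8*ε^2)) * (a - x₀)^2)) := by
          rw [hM]; ring
  have step2 : ∀ x₀ : ℝ, Integrable (F2 x₀) ∧
      HasDerivAt (fun x => ∫ a, F1 x a) (∫ a, F2 x₀ a) x₀ := by
    intro x₀
    set A := |b 0| + C * |x₀| with hA
    set M := (ε^4)⁻¹ * (c * (4*ε^2) * Real.exp (1/(4*ε^2)))
        + (ε^2)⁻¹ * (c * Real.exp (1/(4*ε^2))) with hM
    have hMpos : 0 < M := by positivity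
    refine hasDerivAt_integral_of_dominated_loc_of_deriv_le (Metric.ball_mem_nhds x₀ one_pos)
      (Filter.Eventually.of_forall fun x => (cont1 x).aestronglyMeasurable)
      ((step1 x₀).1) (cont2 x₀).aestronglyMeasurable
      (bound := fun a => M * ((A + C * |a - x₀|) * Real.exp (-(1/(8*ε^2)) * (a - x₀)^2)))
      (Filter.Eventually.of_forall fun a x hx => ?_)
      ((int_master hk8 A C x₀).const_mul M)
      (Filter.Eventually.of_forall fun a x _ => hd1 x a)
    have hx1 : |x - x₀| < 1 := by
      rw [← Real.dist_eq]
      exact mem_ball.1 hx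
    rw [Real.norm_eq_abs]
    refine le_trans (habs2 x a) ?_
    have h2 : Real.exp (-((a-x)^2)/(4*ε^2))
        ≤ Real.exp (1/(4*ε^2)) * Real.exp (-(1/(8*ε^2)) * (a-x₀)^2) := ballExp hε hx1
    have hsplit : ((a-x)^2/ε^4 + 1/ε^2) * gaussKernel ε (a - x)
        = (ε^4)⁻¹ * ((a-x)^2 * gaussKernel ε (a - x)) + (ε^2)⁻¹ * gaussKernel ε (a - x) := by
      ring
    have hEpos : (0:ℝ) ≤ Real.exp (1/(4*ε^2)) * Real.exp (-(1/(8*ε^2)) * (a-x₀)^2) := by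
      positivity
    have hin : ((a-x)^2/ε^4 + 1/ε^2) * gaussKernel ε (a - x)
        ≤ M * Real.exp (-(1/(8*ε^2)) * (a-x₀)^2) := by
      rw [hsplit]
      have hb2 : (a-x)^2 * gaussKernel ε (a - x)
          ≤ c * (4*ε^2) * (Real.exp (1/(4*ε^2)) * Real.exp (-(1/(8*ε^2)) * (a-x₀)^2)) :=
        le_trans (bound2 hε _) (mul_le_mul_of_nonneg_left h2 (by positivity))
      have hb0 : gaussKernel ε (a - x)
          ≤ c * (Real.exp (1/(4*ε^2)) * Real.exp (-(1/(8*ε^2)) * (a-x₀)^2)) :=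
        le_trans (bound0 hε _) (mul_le_mul_of_nonneg_left h2 hcpos.le)
      have := add_le_add (mul_le_mul_of_nonneg_left hb2 (by positivity : (0:ℝ) ≤ (ε^4)⁻¹))
        (mul_le_mul_of_nonneg_left hb0 (by positivity : (0:ℝ) ≤ (ε^2)⁻¹))
      refine le_trans this (le_of_eq ?_)
      rw [hM]
      ring
    calc |b a| * (((a-x)^2/ε^4 + 1/ε^2) * gaussKernel ε (a - x))
        ≤ (A + C * |a - x₀|) * (((a-x)^2/ε^4 + 1/ε^2) * gaussKernel ε (a - x)) := by
          apply mul_le_mul_of_nonneg_right (hbb a x₀)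
          have := gK_nonneg hε (a - x)
          positivity
      _ ≤ (A + C * |a - x₀|) * (M * Real.exp (-(1/(8*ε^2)) * (a-x₀)^2)) := by
          apply mul_le_mul_of_nonneg_left hin
          have : 0 ≤ A + C * |a - x₀| := by
            have h0 : 0 ≤ |b 0| + C * |x₀| := by positivity
            rw [hA]
            nlinarith [abs_nonneg (a - x₀)]
          exact this
      _ = M * ((A + C * |a - x₀|) * Real.exp (-(1/(8*ε^2)) * (a - x₀)^2)) := by ring
  -- translation representations
  have rep0 : ∀ x : ℝ, (∫ a, F0 x a) = ∫ u, b (u + x) * gaussKernel ε u := by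
    intro x
    have := integral_add_right_eq_self (μ := volume) (fun a => b a * gaussKernel ε (a - x)) x
    simp only [add_sub_cancel_right] at this
    exact this.symm
  have rep1 : ∀ x : ℝ, (∫ a, F1 x a) = ∫ u, b (u + x) * (u/ε^2 * gaussKernel ε u) := by
    intro x
    have := integral_add_right_eq_self (μ := volume)
      (fun a => b a * ((a - x)/ε^2 * gaussKernel ε (a - x))) x
    simp only [add_sub_cancel_right] at this
    exact this.symm
  have intrep0 : ∀ x : ℝ, Integrable (fun u => b (u + x) * gaussKernel ε u) := by
    intro x
    have := (int0 x).comp_add_right x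
    simp only [hF0, add_sub_cancel_right] at this
    exact this
  have intrep1 : ∀ x : ℝ, Integrable (fun u => b (u + x) * (u/ε^2 * gaussKernel ε u)) := by
    intro x
    have := ((step1 x).1).comp_add_right x
    simp only [hF1, add_sub_cancel_right] at this
    exact this
  -- Lipschitz estimates
  have lip0 : ∀ x y : ℝ, |(∫ a, F0 x a) - ∫ a, F0 y a| ≤ C * |x - y| := by
    intro x y
    rw [rep0 x, rep0 y, ← integral_sub (intrep0 x) (intrep0 y)]
    have hbd : Integrable (fun u : ℝ => C * |x - y| * gaussKernel ε u) :=
      (integrable_gK hε).const_mul _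
    rw [← Real.norm_eq_abs]
    refine le_trans (norm_integral_le_of_norm_le hbd
      (Filter.Eventually.of_forall fun u => ?_)) (le_of_eq ?_)
    · rw [Real.norm_eq_abs, ← sub_mul, abs_mul, abs_of_nonneg (gK_nonneg hε _)]
      have h := hLip (u + x) (u + y)
      have e : |u + x - (u + y)| = |x - y| := by
        congr 1
        ring
      rw [e] at h
      exact mul_le_mul_of_nonneg_right h (gK_nonneg hε _)
    · rw [integral_const_mul, integral_gK hε]
      ring
  have lip1 : ∀ x y : ℝ, |(∫ a, F1 x a) - ∫ a, F1 y a|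
      ≤ (C * Real.sqrt (2/Real.pi) / ε) * |x - y| := by
    intro x y
    rw [rep1 x, rep1 y, ← integral_sub (intrep1 x) (intrep1 y)]
    have hbd : Integrable (fun u : ℝ => C * |x - y| * ((ε^2)⁻¹ * (|u| * gaussKernel ε u))) :=
      ((integrable_abs_gK hε).const_mul _).const_mul _
    rw [← Real.norm_eq_abs]
    refine le_trans (norm_integral_le_of_norm_le hbd
      (Filter.Eventually.of_forall fun u => ?_)) (le_of_eq ?_)
    · rw [Real.norm_eq_abs]
      have e : b (u + x) * (u/ε^2 * gaussKernel ε u) - b (u + y) * (u/ε^2 * gaussKernel ε u)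
          = (b (u + x) - b (u + y)) * (u/ε^2 * gaussKernel ε u) := by ring
      rw [e, abs_mul, abs_mul, abs_div, abs_of_nonneg (gK_nonneg hε _),
        abs_of_pos (by positivity : (0:ℝ) < ε^2)]
      have h := hLip (u + x) (u + y)
      have e2 : |u + x - (u + y)| = |x - y| := by
        congr 1
        ring
      rw [e2] at h
      have hnn : (0:ℝ) ≤ |u|/ε^2 * gaussKernel ε u := by
        have := gK_nonneg hε u
        positivity
      refine le_trans (mul_le_mul_of_nonneg_right h hnn) (le_of_eq ?_)
      ring
    · rw [integral_const_mul, integral_const_mul, integral_abs_gK hε]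
      field_simp
  -- conclude
  have hg0 : gaussMollify ε b = fun x => ∫ a, F0 x a := rfl
  have hder0 : ∀ x : ℝ, HasDerivAt (gaussMollify ε b) (∫ a, F1 x a) x := by
    intro x
    rw [hg0]
    exact (step1 x).2
  have hderiv0 : deriv (gaussMollify ε b) = fun x => ∫ a, F1 x a :=
    funext fun x => (hder0 x).deriv
  have hder1 : ∀ x : ℝ, HasDerivAt (deriv (gaussMollify ε b)) (∫ a, F2 x a) x := by
    intro x
    rw [hderiv0]
    exact (step2 x).2
  refine ⟨fun x => (hder0 x).differentiableAt, fun x => (hder1 x).differentiableAt, ?_, ?_⟩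
  · intro x
    have e : deriv (gaussMollify ε b) x = ∫ a, F1 x a := (hder0 x).deriv
    rw [e]
    exact abs_le_of_slope (hder0 x) fun y => lip0 y x
  · intro x
    have e1 : deriv (deriv (gaussMollify ε b)) x = deriv (fun x => ∫ a, F1 x a) x := by
      rw [hderiv0]
    have e2 : deriv (fun x => ∫ a, F1 x a) x = ∫ a, F2 x a := ((step2 x).2).deriv
    rw [e1, e2]
    exact abs_le_of_slope (step2 x).2 fun y => lip1 y x
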